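/- Let X be an n×p real matrix with nonzero columns and coherence μ(X) > 0. Fix ν ∈ [0,1]. If u, v ∈ ℝᵖ satisfy |spt(u) ∪ spt(v)| ≤ (1-ν)(1+1/μ(X)), then ‖X(u-v)‖₂² ≥ ν(1+μ(X)) Σⱼ |u_j - v_j|² ‖V_j‖₂². In particular this holds if both |spt(u)| and |spt(v)| are at most (1-ν)(1+1/μ(X))/2. -/

import Mathlib

theorem main_lemma (n p : ℕ) (X : Matrix (Fin n) (Fin p) ℝ) (μ ν : ℝ)
    (hμ : 0 < μ)
    (hcoh : ∀ i j : Fin p, i ≠ j →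
      |∑ k, X k i * X k j| ≤ μ * Real.sqrt (∑ k, X k i ^ 2) * Real.sqrt (∑ k, X k j ^ 2))
    (hν : ν ∈ Set.Icc (0 : ℝ) 1)
    (u v : Fin p → ℝ)
    (hS : (((Finset.univ.filter fun j => u j ≠ 0) ∪ (Finset.univ.filter fun j => v j ≠ 0)).card : ℝ)
          ≤ (1 - ν) * (1 + 1 / μ)) :
      ν * (1 + μ) * ∑ j, (u j - v j) ^ 2 * ∑ i, X i j ^ 2
        ≤ ∑ i, (∑ j, X i j * (u j - v j)) ^ 2 := by
  set S := (Finset.univ.filter fun j => u j ≠ 0) ∪ (Finset.univ.filter fun j => v j ≠ 0) with hSdef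
  set w : Fin p → ℝ := fun j => u j - v j with hw
  set a : Fin p → ℝ := fun j => |w j| * Real.sqrt (∑ i, X i j ^ 2) with ha
  have hwS : ∀ j, j ∉ S → w j = 0 := by
    intro j hj
    simp [hSdef, Finset.mem_union, Finset.mem_filter] at hj
    simp [hw, hj.1, hj.2]
  have haS : ∀ j, j ∉ S → a j = 0 := by
    intro j hj; simp [ha, hwS j hj]
  have ha2 : ∀ j, a j ^ 2 = w j ^ 2 * ∑ i, X i j ^ 2 := by
    intro j
    have : (0:ℝ) ≤ ∑ i, X i j ^ 2 := Finset.sum_nonneg fun i _ => sq_nonneg _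
    rw [ha]; rw [mul_pow, sq_abs, Real.sq_sqrt this]
  have hann : ∀ j, 0 ≤ a j := fun j => mul_nonneg (abs_nonneg _) (Real.sqrt_nonneg _)
  -- expand
  have expand : ∑ i, (∑ j, X i j * w j) ^ 2
      = ∑ j, ∑ k, (w j * w k) * (∑ i, X i j * X i k) := by
    simp only [sq, Finset.sum_mul_sum, Finset.mul_sum, Finset.sum_mul]
    rw [Finset.sum_comm]
    refine Finset.sum_congr rfl fun j _ => ?_
    rw [Finset.sum_comm]
    refine Finset.sum_congr rfl fun k _ => ?_
    refine Finset.sum_congr rfl fun i _ => ?_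
    ring
  -- split diag
  have split : ∑ j, ∑ k, (w j * w k) * (∑ i, X i j * X i k)
      = (∑ j, w j ^ 2 * ∑ i, X i j ^ 2)
        + ∑ j, ∑ k ∈ Finset.univ.erase j, (w j * w k) * (∑ i, X i j * X i k) := by
    rw [← Finset.sum_add_distrib]
    refine Finset.sum_congr rfl fun j _ => ?_
    rw [← Finset.add_sum_erase _ _ (Finset.mem_univ j)]
    congr 1
    simp [sq]
  -- per-term bound off-diagonal
  have offterm : ∀ j, ∀ k ∈ Finset.univ.erase j,
      -(μ * (a j * a k)) ≤ (w j * w k) * (∑ i, X i j * X i k) := by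
    intro j k hk
    have hjk : j ≠ k := (Finset.ne_of_mem_erase hk).symm
    have h1 : |(w j * w k) * (∑ i, X i j * X i k)| ≤ μ * (a j * a k) := by
      rw [abs_mul, abs_mul]
      have := hcoh j k hjk
      calc |w j| * |w k| * |∑ i, X i j * X i k|
          ≤ |w j| * |w k| * (μ * Real.sqrt (∑ i, X i j ^ 2) * Real.sqrt (∑ i, X i k ^ 2)) := by
            apply mul_le_mul_of_nonneg_left this (mul_nonneg (abs_nonneg _) (abs_nonneg _))
        _ = μ * (a j * a k) := by simp [ha]; ring
    linarith [neg_abs_le ((w j * w k) * (∑ i, X i j * X i k))]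
  have offbound : ∑ j, ∑ k ∈ Finset.univ.erase j, (-(μ * (a j * a k)))
      ≤ ∑ j, ∑ k ∈ Finset.univ.erase j, (w j * w k) * (∑ i, X i j * X i k) :=
    Finset.sum_le_sum fun j _ => Finset.sum_le_sum (offterm j)
  -- compute the a-cross sum
  have cross : ∑ j, ∑ k ∈ Finset.univ.erase j, (a j * a k)
      = (∑ j, a j) ^ 2 - ∑ j, a j ^ 2 := by
    have : ∀ j : Fin p, ∑ k ∈ Finset.univ.erase j, (a j * a k)
        = a j * (∑ k, a k) - a j ^ 2 := by
      intro j
      rw [← Finset.mul_sum, ← Finset.add_sum_erase _ _ (Finset.mem_univ j)]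
      ring
    simp only [this]
    rw [Finset.sum_sub_distrib, ← Finset.sum_mul, sq]
  -- Cauchy-Schwarz on support
  have hcs : (∑ j, a j) ^ 2 ≤ (S.card : ℝ) * ∑ j, a j ^ 2 := by
    have e1 : ∑ j, a j = ∑ j ∈ S, a j :=
      (Finset.sum_subset (Finset.subset_univ S) (fun x _ hx => haS x hx)).symm
    have e2 : ∑ j, a j ^ 2 = ∑ j ∈ S, a j ^ 2 :=
      (Finset.sum_subset (Finset.subset_univ S) (fun x _ hx => by simp [haS x hx])).symm
    rw [e1, e2]
    have h := sq_sum_le_card_mul_sum_sq (s := S) (f := a)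
    exact_mod_cast h
  have hA : (0:ℝ) ≤ ∑ j, a j ^ 2 := Finset.sum_nonneg fun j _ => sq_nonneg _
  -- put together
  have key : (1 + μ - μ * S.card) * ∑ j, a j ^ 2 ≤ ∑ i, (∑ j, X i j * w j) ^ 2 := by
    rw [expand, split]
    have hdiag : ∑ j, w j ^ 2 * ∑ i, X i j ^ 2 = ∑ j, a j ^ 2 := by
      simp only [ha2]
    rw [hdiag]
    have h2 : -(μ * ((∑ j, a j) ^ 2 - ∑ j, a j ^ 2))
        ≤ ∑ j, ∑ k ∈ Finset.univ.erase j, (w j * w k) * (∑ i, X i j * X i k) := by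
      calc -(μ * ((∑ j, a j) ^ 2 - ∑ j, a j ^ 2))
          = ∑ j, ∑ k ∈ Finset.univ.erase j, (-(μ * (a j * a k))) := by
            simp only [Finset.sum_neg_distrib, ← Finset.mul_sum, ← cross]
        _ ≤ _ := offbound
    have h3 : μ * ((∑ j, a j) ^ 2 - ∑ j, a j ^ 2)
        ≤ μ * ((S.card : ℝ) * ∑ j, a j ^ 2 - ∑ j, a j ^ 2) := by
      apply mul_le_mul_of_nonneg_left _ hμ.le
      linarith
    nlinarith
  have hfin : ν * (1 + μ) ≤ 1 + μ - μ * S.card := by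
    have h4 : μ * (S.card : ℝ) ≤ μ * ((1 - ν) * (1 + 1 / μ)) :=
      mul_le_mul_of_nonneg_left hS hμ.le
    have : μ * ((1 - ν) * (1 + 1 / μ)) = (1 - ν) * (μ + 1) := by
      field_simp
    nlinarith
  calc ν * (1 + μ) * ∑ j, (u j - v j) ^ 2 * ∑ i, X i j ^ 2
      = ν * (1 + μ) * ∑ j, a j ^ 2 := by simp only [ha2, hw]
    _ ≤ (1 + μ - μ * S.card) * ∑ j, a j ^ 2 := mul_le_mul_of_nonneg_right hfin hA
    _ ≤ ∑ i, (∑ j, X i j * w j) ^ 2 := key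


/-- Separability of pairs: if `|spt(u) ∪ spt(v)| ≤ (1-ν)(1+1/μ(X))` then
`‖X(u-v)‖₂² ≥ ν(1+μ(X)) Σⱼ |u_j - v_j|² ‖V_j‖₂²`; in particular this holds if both
supports have size at most `(1-ν)(1+1/μ(X))/2`. -/
theorem separable_pair (n p : ℕ) (X : Matrix (Fin n) (Fin p) ℝ) (μ ν : ℝ)
    (hcol : ∀ j, ∃ i, X i j ≠ 0) (hμ : 0 < μ)
    (hcoh : ∀ i j : Fin p, i ≠ j →
      |∑ k, X k i * X k j| ≤ μ * Real.sqrt (∑ k, X k i ^ 2) * Real.sqrt (∑ k, X k j ^ 2))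
    (hcoh_max : ∃ i j : Fin p, i ≠ j ∧
      |∑ k, X k i * X k j| = μ * Real.sqrt (∑ k, X k i ^ 2) * Real.sqrt (∑ k, X k j ^ 2))
    (hν : ν ∈ Set.Icc (0 : ℝ) 1) :
    (∀ u v : Fin p → ℝ,
      (((Finset.univ.filter fun j => u j ≠ 0) ∪ (Finset.univ.filter fun j => v j ≠ 0)).card : ℝ)
          ≤ (1 - ν) * (1 + 1 / μ) →
      ν * (1 + μ) * ∑ j, (u j - v j) ^ 2 * ∑ i, X i j ^ 2
        ≤ ∑ i, (∑ j, X i j * (u j - v j)) ^ 2) ∧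
    (∀ u v : Fin p → ℝ,
      ((Finset.univ.filter fun j => u j ≠ 0).card : ℝ) ≤ (1 - ν) * (1 + 1 / μ) / 2 →
      ((Finset.univ.filter fun j => v j ≠ 0).card : ℝ) ≤ (1 - ν) * (1 + 1 / μ) / 2 →
      ν * (1 + μ) * ∑ j, (u j - v j) ^ 2 * ∑ i, X i j ^ 2
        ≤ ∑ i, (∑ j, X i j * (u j - v j)) ^ 2) := by
  constructor
  · intro u v hS
    exact main_lemma n p X μ ν hμ hcoh hν u v hS
  · intro u v hu hv
    apply main_lemma n p X μ ν hμ hcoh hν u v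
    have hcard := Finset.card_union_le (Finset.univ.filter fun j => u j ≠ 0)
      (Finset.univ.filter fun j => v j ≠ 0)
    have : ((((Finset.univ.filter fun j => u j ≠ 0) ∪
        (Finset.univ.filter fun j => v j ≠ 0)).card : ℝ))
        ≤ ((Finset.univ.filter fun j => u j ≠ 0).card : ℝ)
          + ((Finset.univ.filter fun j => v j ≠ 0).card : ℝ) := by
      exact_mod_cast hcard
    linarith
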